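/- For all integers n ≥ 0, r ≥ 1 and k ≥ 1, the determinant of the n×n matrix over ℚ with entries binom(i+(r-1)j+k, i-j+1) for 0 ≤ j ≤ i+1 and 0 for j > i+1, 0 ≤ i, j ≤ n-1, equals (k/(rn+k))·binom(rn+k, n). -/

import Mathlib

open Finset

/-- Weighted Fuss–Catalan numbers: with `r = s+1`, `BB s k m = (k/(rm+k))·C(rm+k,m)`
written in subtraction-free form. -/
def BB (s k : ℕ) : ℕ → ℚ
  | 0 => 1
  | m + 1 => (Nat.choose ((s+1)*(m+1)+k) (m+1) : ℚ)
      - (s+1) * (Nat.choose (s*(m+1)+m+k) m : ℚ)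

lemma BB_key (s k m : ℕ) :
    (((s+1)*(m+1)+k : ℕ) : ℚ) * (Nat.choose (s*(m+1)+m+k) m : ℚ)
      = (Nat.choose ((s+1)*(m+1)+k) (m+1) : ℚ) * (m+1) := by
  have harg : (s+1)*(m+1)+k = (s*(m+1)+m+k) + 1 := by ring
  have h := Nat.add_one_mul_choose_eq (s*(m+1)+m+k) m
  rw [harg]
  exact_mod_cast congrArg (Nat.cast : ℕ → ℚ) h

lemma BB_zero (s m : ℕ) : BB s 0 (m+1) = 0 := by
  have h := BB_key s 0 m
  have hm : ((m : ℚ) + 1) ≠ 0 := by positivity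
  show (Nat.choose ((s+1)*(m+1)+0) (m+1) : ℚ) - (s+1) * (Nat.choose (s*(m+1)+m+0) m : ℚ) = 0
  have : (((s+1)*(m+1)+0 : ℕ) : ℚ) = ((s:ℚ)+1) * ((m:ℚ)+1) := by push_cast; ring
  rw [this] at h
  have := mul_right_cancel₀ hm (by linear_combination h :
    (((s:ℚ)+1) * (Nat.choose (s*(m+1)+m+0) m : ℚ)) * ((m:ℚ)+1)
      = (Nat.choose ((s+1)*(m+1)+0) (m+1) : ℚ) * ((m:ℚ)+1))
  linarith [this]

lemma BB_rec (s t m : ℕ) :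
    BB s (t+1) (m+1) = BB s t (m+1) + BB s (t+s+1) m := by
  cases m with
  | zero =>
      show (Nat.choose ((s+1)*(0+1)+(t+1)) (0+1) : ℚ)
          - (s+1) * (Nat.choose (s*(0+1)+0+(t+1)) 0 : ℚ)
        = ((Nat.choose ((s+1)*(0+1)+t) (0+1) : ℚ)
          - (s+1) * (Nat.choose (s*(0+1)+0+t) 0 : ℚ)) + 1
      simp [Nat.choose_one_right]
  | succ m =>
      show (Nat.choose ((s+1)*(m+2)+(t+1)) (m+2) : ℚ)
          - (s+1) * (Nat.choose (s*(m+2)+(m+1)+(t+1)) (m+1) : ℚ)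
        = ((Nat.choose ((s+1)*(m+2)+t) (m+2) : ℚ)
          - (s+1) * (Nat.choose (s*(m+2)+(m+1)+t) (m+1) : ℚ))
          + ((Nat.choose ((s+1)*(m+1)+(t+s+1)) (m+1) : ℚ)
          - (s+1) * (Nat.choose (s*(m+1)+m+(t+s+1)) m : ℚ))
      have e1 : (s+1)*(m+2)+(t+1) = ((s+1)*(m+2)+t) + 1 := by ring
      have e2 : s*(m+2)+(m+1)+(t+1) = (s*(m+2)+(m+1)+t) + 1 := by ring
      have e3 : (s+1)*(m+1)+(t+s+1) = (s+1)*(m+2)+t := by ring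
      have e4 : s*(m+1)+m+(t+s+1) = s*(m+2)+(m+1)+t := by ring
      rw [e1, e2, e3, e4, Nat.choose_succ_succ ((s+1)*(m+2)+t) (m+1),
        Nat.choose_succ_succ (s*(m+2)+(m+1)+t) m]
      push_cast
      ring

/-- `SS s k n` is the alternating Hessenberg sum `S(n+1, k)`. -/
def SS (s k n : ℕ) : ℚ :=
  ∑ m ∈ range (n+2), (-1)^m * BB s k m * (Nat.choose (s*m+n+k) (n+1-m) : ℚ)

lemma SS_zero (s : ℕ) : ∀ n k, SS s k n = 0 := by
  intro n
  induction n with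
  | zero =>
      intro k
      show ∑ m ∈ range 2, (-1)^m * BB s k m * (Nat.choose (s*m+0+k) (1-m) : ℚ) = 0
      rw [Finset.sum_range_succ, Finset.sum_range_succ, Finset.sum_range_zero]
      have h1 : BB s k 1 = (k : ℚ) := by
        show (Nat.choose ((s+1)*(0+1)+k) (0+1) : ℚ)
            - (s+1) * (Nat.choose (s*(0+1)+0+k) 0 : ℚ) = (k : ℚ)
        simp [Nat.choose_one_right]
      simp [BB, h1, Nat.choose_one_right]
  | succ n ih =>
      intro k
      induction k with
      | zero =>
          show ∑ m ∈ range (n+3), (-1)^m * BB s 0 m * (Nat.choose (s*m+(n+1)+0) (n+2-m) : ℚ) = 0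
          rw [Finset.sum_range_succ' ]
          have : ∀ m ∈ range (n+2),
              (-1 : ℚ)^(m+1) * BB s 0 (m+1) * (Nat.choose (s*(m+1)+(n+1)+0) (n+2-(m+1)) : ℚ) = 0 := by
            intro m _
            rw [BB_zero]
            ring
          rw [Finset.sum_congr rfl this]
          simp [BB, Nat.choose_eq_zero_of_lt (by omega : n+1 < n+2)]
      | succ t iht =>
          -- S(n+2, t+1) = S(n+1, t+1) + S(n+2, t) - S(n+1, t+s+1)
          have key : SS s (t+1) (n+1) = SS s (t+1) n + SS s t (n+1) - SS s (t+s+1) n := by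
            have pascal : ∀ m ∈ range (n+2),
                (-1:ℚ)^m * BB s (t+1) m * (Nat.choose (s*m+(n+1)+(t+1)) (n+2-m) : ℚ)
                  = (-1)^m * BB s (t+1) m * (Nat.choose (s*m+n+(t+1)) (n+1-m) : ℚ)
                    + (-1)^m * BB s (t+1) m * (Nat.choose (s*m+n+(t+1)) (n+2-m) : ℚ) := by
              intro m hm
              have hm' : m ≤ n+1 := by simpa using Nat.lt_succ_iff.mp (mem_range.mp hm)
              have e1 : s*m+(n+1)+(t+1) = (s*m+n+(t+1)) + 1 := by ring
              have e2 : n+2-m = (n+1-m) + 1 := by omega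
              rw [e1, e2, Nat.choose_succ_succ]
              push_cast
              ring
            -- expand SS s (t+1) (n+1) over range (n+3): peel the last term
            have expand : SS s (t+1) (n+1)
                = (∑ m ∈ range (n+2), (-1:ℚ)^m * BB s (t+1) m
                    * (Nat.choose (s*m+(n+1)+(t+1)) (n+2-m) : ℚ))
                  + (-1)^(n+2) * BB s (t+1) (n+2) * 1 := by
              show (∑ m ∈ range (n+3), (-1:ℚ)^m * BB s (t+1) m
                    * (Nat.choose (s*m+(n+1)+(t+1)) (n+2-m) : ℚ)) = _
              rw [Finset.sum_range_succ]
              simp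
            have A2' : (∑ m ∈ range (n+3), (-1:ℚ)^m * BB s (t+1) m
                    * (Nat.choose (s*m+n+(t+1)) (n+2-m) : ℚ))
                = SS s t (n+1) - SS s (t+s+1) n := by
              rw [Finset.sum_range_succ']
              have step : ∀ m ∈ range (n+2),
                  (-1:ℚ)^(m+1) * BB s (t+1) (m+1)
                    * (Nat.choose (s*(m+1)+n+(t+1)) (n+2-(m+1)) : ℚ)
                  = (-1)^(m+1) * BB s t (m+1)
                      * (Nat.choose (s*(m+1)+(n+1)+t) (n+2-(m+1)) : ℚ)
                    - (-1)^m * BB s (t+s+1) m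
                      * (Nat.choose (s*m+n+(t+s+1)) (n+1-m) : ℚ) := by
                intro m hm
                rw [BB_rec]
                have e1 : s*(m+1)+(n+1)+t = s*(m+1)+n+(t+1) := by ring
                have e2 : s*m+n+(t+s+1) = s*(m+1)+n+(t+1) := by ring
                have e3 : n+2-(m+1) = n+1-m := by omega
                rw [e1, e2, e3]
                ring
              rw [Finset.sum_congr rfl step, Finset.sum_sub_distrib]
              have hSt : SS s t (n+1)
                  = (∑ m ∈ range (n+2), (-1:ℚ)^(m+1) * BB s t (m+1)
                      * (Nat.choose (s*(m+1)+(n+1)+t) (n+2-(m+1)) : ℚ))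
                    + (-1:ℚ)^0 * BB s t 0 * (Nat.choose (s*0+(n+1)+t) (n+2-0) : ℚ) :=
                Finset.sum_range_succ' _ _
              have hSts : SS s (t+s+1) n
                  = ∑ m ∈ range (n+2), (-1:ℚ)^m * BB s (t+s+1) m
                      * (Nat.choose (s*m+n+(t+s+1)) (n+1-m) : ℚ) := rfl
              rw [hSt, hSts]
              have e0 : s*0+n+(t+1) = s*0+(n+1)+t := by ring
              rw [e0]
              show _ = _
              simp [BB]
              ring
            rw [expand, Finset.sum_congr rfl pascal, Finset.sum_add_distrib]
            have h1 : (∑ m ∈ range (n+2), (-1:ℚ)^m * BB s (t+1) m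
                * (Nat.choose (s*m+n+(t+1)) (n+1-m) : ℚ)) = SS s (t+1) n := rfl
            have h2 : (∑ m ∈ range (n+3), (-1:ℚ)^m * BB s (t+1) m
                  * (Nat.choose (s*m+n+(t+1)) (n+2-m) : ℚ))
                = (∑ m ∈ range (n+2), (-1:ℚ)^m * BB s (t+1) m
                  * (Nat.choose (s*m+n+(t+1)) (n+2-m) : ℚ))
                  + (-1:ℚ)^(n+2) * BB s (t+1) (n+2) * 1 := by
              rw [Finset.sum_range_succ]
              simp
            rw [h2] at A2'
            rw [h1]
            linarith [A2']
          rw [key, ih, iht, ih]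
          ring

lemma hess (f : ℕ → ℕ → ℚ) (d : ℕ → ℚ)
    (hz : ∀ i j : ℕ, i+1 < j → f i j = 0)
    (hs : ∀ i : ℕ, f i (i+1) = 1)
    (hd0 : d 0 = 1) (hdne : ∀ m, d m ≠ 0)
    (hrec : ∀ i : ℕ, ∑ j ∈ range (i+2), (-1:ℚ)^j * f i j * d j = 0) :
    ∀ n, (Matrix.of fun i j : Fin n => f i j).det = d n := by
  intro n
  induction n with
  | zero => simp [Matrix.det_fin_zero, hd0]
  | succ n ih =>
    set M : Matrix (Fin (n+1)) (Fin (n+1)) ℚ := Matrix.of fun i j => f i j with hM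
    set u : Fin (n+1) → ℚ := fun j => (-1)^(j:ℕ) * d j with hu
    have hMu : M.mulVec u = Pi.single (Fin.last n) ((-1)^n * d (n+1)) := by
      funext i
      have hrow0 : M.mulVec u i
          = ∑ j ∈ range (n+1), f (i:ℕ) j * ((-1:ℚ)^j * d j) :=
        Fin.sum_univ_eq_sum_range (fun j => f (i:ℕ) j * ((-1:ℚ)^j * d j)) (n+1)
      have hrow : M.mulVec u i
          = ∑ j ∈ range (n+1), (-1:ℚ)^j * f i j * d j := by
        rw [hrow0]
        exact Finset.sum_congr rfl fun j _ => by ring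
      by_cases hi : (i : ℕ) = n
      · have hilast : i = Fin.last n := Fin.ext hi
        have h0 := hrec n
        rw [Finset.sum_range_succ, hs n] at h0
        rw [hrow, hi, hilast, Pi.single_eq_same]
        have : ∑ j ∈ range (n+1), (-1:ℚ)^j * f n j * d j
            = -((-1)^(n+1) * 1 * d (n+1)) := by linarith [h0]
        rw [this]; ring
      · have hilt : (i : ℕ) < n := lt_of_le_of_ne (Nat.lt_succ_iff.mp i.isLt) hi
        have hsub : ∑ j ∈ range (n+1), (-1:ℚ)^j * f i j * d j
            = ∑ j ∈ range ((i:ℕ)+2), (-1:ℚ)^j * f i j * d j := by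
          refine (Finset.sum_subset ?_ ?_).symm
          · intro x hx; rw [mem_range] at *; omega
          · intro x _ hx
            rw [mem_range] at hx
            rw [hz i x (by omega)]
            ring
        rw [hrow, hsub, hrec i, Pi.single_eq_of_ne (by simpa [Fin.ext_iff] using hi)]
    have adjeq := congrArg
      (fun A : Matrix (Fin (n+1)) (Fin (n+1)) ℚ => A.mulVec u) (Matrix.adjugate_mul M)
    simp only [← Matrix.mulVec_mulVec, hMu, Matrix.mulVec_single,
      Matrix.smul_mulVec, Matrix.one_mulVec] at adjeq
    have hlast := congrFun adjeq (Fin.last n)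
    have hadj : M.adjugate (Fin.last n) (Fin.last n) = d n := by
      rw [Matrix.adjugate_fin_succ_eq_det_submatrix]
      have hsubm : M.submatrix (Fin.last n).succAbove (Fin.last n).succAbove
          = Matrix.of fun i j : Fin n => f i j := by
        ext i j
        simp [hM, Fin.succAbove_last]
      have hpow : ((-1:ℚ))^((Fin.last n : ℕ) + (Fin.last n : ℕ)) = 1 := by
        rw [Fin.val_last, ← two_mul, pow_mul]; norm_num
      rw [hsubm, ih, hpow, one_mul]
    rw [Pi.smul_apply, Matrix.col_apply, hadj, op_smul_eq_mul, Pi.smul_apply] at hlast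
    have hu' : u (Fin.last n) = (-1)^n * d n := by simp [hu, Fin.val_last]
    rw [hu', smul_eq_mul] at hlast
    have hpow : ((-1:ℚ)^n) ≠ 0 := pow_ne_zero _ (by norm_num)
    have := mul_left_cancel₀ (mul_ne_zero hpow (hdne n))
      (show ((-1:ℚ)^n * d n) * d (n+1) = ((-1:ℚ)^n * d n) * M.det by
        linear_combination hlast)
    exact this.symm

lemma BB_ne (s t m : ℕ) : BB s (t+1) m ≠ 0 := by
  cases m with
  | zero => norm_num [BB]
  | succ m =>
      have key := BB_key s (t+1) m
      push_cast at key
      have hCpos : 0 < Nat.choose ((s+1)*(m+1)+(t+1)) (m+1) :=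
        Nat.choose_pos (by nlinarith)
      have hC : (0:ℚ) < (Nat.choose ((s+1)*(m+1)+(t+1)) (m+1) : ℚ) := by
        exact_mod_cast hCpos
      show (Nat.choose ((s+1)*(m+1)+(t+1)) (m+1) : ℚ)
          - (s+1) * (Nat.choose (s*(m+1)+m+(t+1)) m : ℚ) ≠ 0
      have hpos : (0:ℚ) < ((s:ℚ)+1) * ((m:ℚ)+1) + (t:ℚ) + 1 := by positivity
      intro h
      have : ((Nat.choose ((s+1)*(m+1)+(t+1)) (m+1) : ℚ)
          - (s+1) * (Nat.choose (s*(m+1)+m+(t+1)) m : ℚ))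
          * (((s:ℚ)+1) * ((m:ℚ)+1) + (t:ℚ) + 1)
          = ((t:ℚ)+1) * (Nat.choose ((s+1)*(m+1)+(t+1)) (m+1) : ℚ) := by
        linear_combination (-((s:ℚ)+1)) * key
      rw [h, zero_mul] at this
      nlinarith

lemma BB_val (s t : ℕ) (n : ℕ) :
    BB s (t+1) n
      = (((t:ℚ)+1) / (((s+1)*n+(t+1) : ℕ) : ℚ))
        * (Nat.choose ((s+1)*n+(t+1)) n : ℚ) := by
  cases n with
  | zero =>
      have ht : ((t:ℚ)+1) ≠ 0 := by positivity
      simp [BB, ht]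
  | succ m =>
      have key := BB_key s (t+1) m
      push_cast at key ⊢
      have hpos : (0:ℚ) < ((s:ℚ)+1) * ((m:ℚ)+1) + ((t:ℚ)+1) := by positivity
      show (Nat.choose ((s+1)*(m+1)+(t+1)) (m+1) : ℚ)
          - ((s:ℚ)+1) * (Nat.choose (s*(m+1)+m+(t+1)) m : ℚ) = _
      rw [div_mul_eq_mul_div, eq_div_iff hpos.ne']
      linear_combination (-((s:ℚ)+1)) * key

theorem stmt_11 (n r k : ℕ) (hr : 1 ≤ r) (hk : 1 ≤ k) :
    Matrix.det (Matrix.of fun i j : Fin n =>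
        if (j : ℕ) ≤ (i : ℕ) + 1 then
          (Nat.choose ((i : ℕ) + (r - 1) * (j : ℕ) + k) ((i : ℕ) + 1 - (j : ℕ)) : ℚ)
        else 0)
      = ((k : ℚ) / ((r * n + k : ℕ) : ℚ)) * (Nat.choose (r * n + k) n : ℚ) := by
  obtain ⟨s, rfl⟩ : ∃ s, r = s + 1 := ⟨r - 1, by omega⟩
  obtain ⟨t, rfl⟩ : ∃ t, k = t + 1 := ⟨k - 1, by omega⟩
  set f : ℕ → ℕ → ℚ := fun i j =>
    if j ≤ i + 1 then (Nat.choose (i + s*j + (t+1)) (i+1-j) : ℚ) else 0 with hf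
  have hmat : (Matrix.of fun i j : Fin n =>
        if (j : ℕ) ≤ (i : ℕ) + 1 then
          (Nat.choose ((i : ℕ) + (s + 1 - 1) * (j : ℕ) + (t+1)) ((i : ℕ) + 1 - (j : ℕ)) : ℚ)
        else 0)
      = Matrix.of fun i j : Fin n => f (i : ℕ) (j : ℕ) := by
    ext i j
    simp only [Matrix.of_apply, hf, Nat.add_sub_cancel]
  rw [hmat]
  have hdet := hess f (BB s (t+1))
    (by
      intro i j hij
      simp only [hf]
      rw [if_neg (by omega)])
    (by
      intro i
      simp only [hf]
      rw [if_pos (le_refl _)]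
      simp)
    rfl
    (fun m => BB_ne s t m)
    (by
      intro i
      have hSS : SS s (t+1) i
          = ∑ j ∈ range (i+2), (-1:ℚ)^j * f i j * BB s (t+1) j := by
        refine Finset.sum_congr rfl fun j hj => ?_
        have hj' : j ≤ i + 1 := by
          have := Finset.mem_range.mp hj; omega
        simp only [hf]
        rw [if_pos hj']
        have harg : s*j+i+(t+1) = i + s*j + (t+1) := by ring
        rw [harg]
        ring
      rw [← hSS]
      exact SS_zero s i (t+1))
    n
  rw [hdet, BB_val]
  push_cast
  ring
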